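/- If a mechanism M satisfies (ε, 0)-differential privacy, then it satisfies (α, αε²/2)-Rényi differential privacy for every order α > 1; in fact it satisfies the stronger bound D_α(M(D) ‖ M(D')) ≤ min(αε²/2, ε) for all adjacent D, D'. -/

import Mathlib

open Real Finset

/-- `sinh t ≤ t * cosh t` for `t ≥ 0`. -/
lemma sinh_le_mul_cosh {t : ℝ} (ht : 0 ≤ t) : Real.sinh t ≤ t * Real.cosh t := by
  have hmono : MonotoneOn (fun s : ℝ => s * Real.cosh s - Real.sinh s) (Set.Ici 0) := by
    have hder : ∀ s : ℝ, HasDerivAt (fun s : ℝ => s * Real.cosh s - Real.sinh s)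
        (s * Real.sinh s) s := by
      intro s
      have h1 : HasDerivAt (fun s : ℝ => s * Real.cosh s)
          (1 * Real.cosh s + s * Real.sinh s) s :=
        (hasDerivAt_id s).mul (Real.hasDerivAt_cosh s)
      have h2 := h1.sub (Real.hasDerivAt_sinh s)
      exact h2.congr_deriv (by ring)
    apply monotoneOn_of_hasDerivWithinAt_nonneg (convex_Ici 0)
      (f' := fun s => s * Real.sinh s)
    · exact (Continuous.sub (continuous_id.mul Real.continuous_cosh)
        Real.continuous_sinh).continuousOn
    · intro x hx; exact (hder x).hasDerivWithinAt
    · intro x hx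
      rw [interior_Ici] at hx
      exact mul_nonneg (le_of_lt hx) (Real.sinh_nonneg_iff.2 (le_of_lt hx))
  have h0 := hmono (Set.self_mem_Ici) (Set.mem_Ici.2 ht) ht
  simp only [Real.sinh_zero, Real.cosh_zero, mul_one, zero_mul, sub_zero, zero_sub, neg_zero,
    mul_zero] at h0
  linarith

/-- Key inequality: for `0 ≤ y ≤ x`, `cosh x ≤ cosh y * exp ((x² - y²)/2)`. -/
lemma cosh_le_cosh_mul_exp {x y : ℝ} (hy : 0 ≤ y) (hxy : y ≤ x) :
    Real.cosh x ≤ Real.cosh y * Real.exp ((x ^ 2 - y ^ 2) / 2) := by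
  have hmono : MonotoneOn (fun t : ℝ => t ^ 2 / 2 - Real.log (Real.cosh t)) (Set.Ici 0) := by
    have hder : ∀ t : ℝ, HasDerivAt (fun t : ℝ => t ^ 2 / 2 - Real.log (Real.cosh t))
        (t - Real.sinh t / Real.cosh t) t := by
      intro t
      have h1 : HasDerivAt (fun t : ℝ => t ^ 2 / 2) t t := by
        have := (hasDerivAt_pow 2 t).div_const 2
        exact this.congr_deriv (by push_cast; ring)
      have h2 : HasDerivAt (fun t : ℝ => Real.log (Real.cosh t))
          (Real.sinh t / Real.cosh t) t :=
        (Real.hasDerivAt_cosh t).log (ne_of_gt (Real.cosh_pos t))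
      exact h1.sub h2
    apply monotoneOn_of_hasDerivWithinAt_nonneg (convex_Ici 0)
      (f' := fun t => t - Real.sinh t / Real.cosh t)
    · apply ContinuousOn.sub
      · exact (continuous_pow 2).continuousOn.div_const 2
      · exact (Real.continuous_cosh.log (fun t => ne_of_gt (Real.cosh_pos t))).continuousOn
    · intro t ht; exact (hder t).hasDerivWithinAt
    · intro t ht
      rw [interior_Ici] at ht
      have h3 := sinh_le_mul_cosh (le_of_lt ht)
      rw [sub_nonneg, div_le_iff₀ (Real.cosh_pos t)]
      linarith
  have h := hmono (Set.mem_Ici.2 hy) (Set.mem_Ici.2 (hy.trans hxy)) hxy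
  simp only at h
  have hlog : Real.log (Real.cosh x) ≤ Real.log (Real.cosh y) + (x ^ 2 - y ^ 2) / 2 := by
    linarith
  calc Real.cosh x = Real.exp (Real.log (Real.cosh x)) :=
        (Real.exp_log (Real.cosh_pos x)).symm
    _ ≤ Real.exp (Real.log (Real.cosh y) + (x ^ 2 - y ^ 2) / 2) := Real.exp_le_exp.2 hlog
    _ = Real.cosh y * Real.exp ((x ^ 2 - y ^ 2) / 2) := by
        rw [Real.exp_add, Real.exp_log (Real.cosh_pos y)]

/-- Master inequality for the Bun–Steinke bound. -/
lemma master_ineq (ε α : ℝ) (hε : 0 < ε) (hα : 1 < α) :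
    (Real.exp ε - 1) * Real.exp (-(ε * α)) + (1 - Real.exp (-ε)) * Real.exp (ε * α)
      ≤ (Real.exp ε - Real.exp (-ε)) * Real.exp (α * (α - 1) * ε ^ 2 / 2) := by
  set u : ℝ := (α - 1 / 2) * ε with hu_def
  set v : ℝ := ε / 2 with hv_def
  have hv0 : 0 < v := by positivity
  have huv : v ≤ u := by nlinarith
  have key := cosh_le_cosh_mul_exp (le_of_lt hv0) huv
  have hexp_eq : (u ^ 2 - v ^ 2) / 2 = α * (α - 1) * ε ^ 2 / 2 := by
    rw [hu_def, hv_def]; ring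
  rw [hexp_eq] at key
  rw [Real.cosh_eq, Real.cosh_eq] at key
  set E := Real.exp (α * (α - 1) * ε ^ 2 / 2) with hE_def
  have hE0 : 0 < E := Real.exp_pos _
  set a := Real.exp u with ha_def
  set b := Real.exp v with hb_def
  have ha0 : 0 < a := Real.exp_pos _
  have hb0 : 0 < b := Real.exp_pos _
  have hbe : Real.exp ε = b * b := by rw [hb_def, ← Real.exp_add, hv_def]; ring_nf
  have hbne : Real.exp (-ε) = (b * b)⁻¹ := by rw [Real.exp_neg, hbe]
  have hab : Real.exp (ε * α) = a * b := by rw [ha_def, hb_def, ← Real.exp_add, hu_def, hv_def]; ring_nf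
  have habn : Real.exp (-(ε * α)) = (a * b)⁻¹ := by rw [Real.exp_neg, hab]
  have hanegu : Real.exp (-u) = a⁻¹ := by rw [Real.exp_neg]
  have hanegv : Real.exp (-v) = b⁻¹ := by rw [Real.exp_neg]
  rw [hanegu, hanegv] at key
  rw [hbe, hbne, hab, habn]
  -- key : (a + a⁻¹)/2 ≤ (b + b⁻¹)/2 * E
  have key' : a + a⁻¹ ≤ (b + b⁻¹) * E := by linarith
  have hb1 : 1 ≤ b := by
    rw [hb_def]; exact Real.one_le_exp (by positivity)
  have hane : a ≠ 0 := ne_of_gt ha0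
  have hbne' : b ≠ 0 := ne_of_gt hb0
  have goal' : (b * b - 1) * (a * b)⁻¹ + (1 - (b * b)⁻¹) * (a * b)
      = ((b * b - 1) / b) * (a + a⁻¹) := by
    field_simp
    ring
  have rhs' : (b * b - (b * b)⁻¹) * E = ((b * b - 1) / b) * ((b + b⁻¹) * E) := by
    field_simp
    ring
  rw [goal', rhs']
  have hfac : 0 ≤ (b * b - 1) / b := by
    apply div_nonneg _ (le_of_lt hb0); nlinarith
  exact mul_le_mul_of_nonneg_left key' hfac

/-- Chord bound from convexity of `x ^ p`. -/
lemma chord_bound {a b x p : ℝ} (ha : 0 < a) (hab : a < b) (hax : a ≤ x) (hxb : x ≤ b)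
    (hp : 1 ≤ p) :
    x ^ p ≤ ((b - x) / (b - a)) * a ^ p + ((x - a) / (b - a)) * b ^ p := by
  have hba : (0:ℝ) < b - a := by linarith
  have hcvx := convexOn_rpow hp
  have hmem_a : a ∈ Set.Ici (0:ℝ) := le_of_lt ha
  have hmem_b : b ∈ Set.Ici (0:ℝ) := le_of_lt (ha.trans_le (le_of_lt hab))
  have hw1 : (0:ℝ) ≤ (b - x) / (b - a) := div_nonneg (by linarith) (le_of_lt hba)
  have hw2 : (0:ℝ) ≤ (x - a) / (b - a) := div_nonneg (by linarith) (le_of_lt hba)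
  have hw12 : (b - x) / (b - a) + (x - a) / (b - a) = 1 := by
    field_simp
    ring
  have h := hcvx.2 hmem_a hmem_b hw1 hw2 hw12
  simp only [smul_eq_mul] at h
  have hcomb : (b - x) / (b - a) * a + (x - a) / (b - a) * b = x := by
    field_simp
    ring
  rwa [hcomb] at h

/-- Rényi divergence of order `α` between discrete distributions `P` and `Q`. -/
noncomputable def renyiDiv {Y : Type*} [Fintype Y] (α : ℝ) (P Q : Y → ℝ) : ℝ :=
  (α - 1)⁻¹ * Real.log (∑ y, Q y * (P y / Q y) ^ α)

/-- If `M` is `(ε,0)`-DP then it is `(α, min(αε²/2, ε))`-RDP for every `α > 1`. -/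
theorem stmt_1 {T Y : Type*} [Fintype Y]
    (Adj : T → T → Prop) (hsymm : Symmetric Adj)
    (M : T → Y → ℝ) (ε : ℝ) (hε : 0 ≤ ε)
    (hpos : ∀ D y, 0 < M D y)
    (hpmf : ∀ D, ∑ y, M D y = 1)
    (hDP : ∀ D D', Adj D D' → ∀ E : Finset Y,
      ∑ y ∈ E, M D y ≤ Real.exp ε * ∑ y ∈ E, M D' y) :
    ∀ α : ℝ, 1 < α → ∀ D D', Adj D D' →
      renyiDiv α (M D) (M D') ≤ min (α * ε ^ 2 / 2) ε := by
  intro α hα D D' hadj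
  have hne : Nonempty Y := by
    by_contra h
    have := hpmf D
    rw [Finset.sum_eq_zero (fun y _ => absurd ⟨y⟩ h)] at this
    norm_num at this
  set P := M D with hP_def
  set Q := M D' with hQ_def
  have hPpos : ∀ y, 0 < P y := hpos D
  have hQpos : ∀ y, 0 < Q y := hpos D'
  have hub : ∀ y, P y ≤ Real.exp ε * Q y := by
    intro y; simpa using hDP D D' hadj {y}
  have hlb : ∀ y, Q y ≤ Real.exp ε * P y := by
    intro y; simpa using hDP D' D (hsymm hadj) {y}
  have hr_ub : ∀ y, P y / Q y ≤ Real.exp ε := by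
    intro y
    rw [div_le_iff₀ (hQpos y)]
    linarith [hub y]
  have hr_lb : ∀ y, Real.exp (-ε) ≤ P y / Q y := by
    intro y
    rw [le_div_iff₀ (hQpos y)]
    have h1 := hlb y
    have h2 : Real.exp (-ε) * Q y ≤ Real.exp (-ε) * (Real.exp ε * P y) :=
      mul_le_mul_of_nonneg_left h1 (le_of_lt (Real.exp_pos _))
    rwa [← mul_assoc, ← Real.exp_add, neg_add_cancel, Real.exp_zero, one_mul] at h2
  set S := ∑ y, Q y * (P y / Q y) ^ α with hS_def
  have hrpos : ∀ y, 0 < P y / Q y := fun y => div_pos (hPpos y) (hQpos y)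
  have hS_pos : 0 < S := by
    apply Finset.sum_pos _ Finset.univ_nonempty
    intro y _
    exact mul_pos (hQpos y) (Real.rpow_pos_of_pos (hrpos y) α)
  have hα1 : (0:ℝ) < α - 1 := by linarith
  -- Bound 2 : S ≤ exp (ε * (α - 1)), hence renyiDiv ≤ ε
  have hS_le2 : S ≤ Real.exp (ε * (α - 1)) := by
    have hterm : ∀ y ∈ Finset.univ, Q y * (P y / Q y) ^ α
        ≤ P y * Real.exp (ε * (α - 1)) := by
      intro y _
      have h1 : (P y / Q y) ^ α = (P y / Q y) * (P y / Q y) ^ (α - 1) := by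
        nth_rewrite 2 [← Real.rpow_one (P y / Q y)]
        rw [← Real.rpow_add (hrpos y)]
        norm_num
      rw [h1, ← mul_assoc, mul_div_cancel₀ _ (ne_of_gt (hQpos y))]
      apply mul_le_mul_of_nonneg_left _ (le_of_lt (hPpos y))
      calc (P y / Q y) ^ (α - 1) ≤ (Real.exp ε) ^ (α - 1) :=
            Real.rpow_le_rpow (le_of_lt (hrpos y)) (hr_ub y) (le_of_lt hα1)
        _ = Real.exp (ε * (α - 1)) := (Real.exp_mul ε (α - 1)).symm
    calc S ≤ ∑ y, P y * Real.exp (ε * (α - 1)) := Finset.sum_le_sum hterm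
      _ = Real.exp (ε * (α - 1)) := by
          rw [← Finset.sum_mul, hpmf D, one_mul]
  have hbound2 : renyiDiv α P Q ≤ ε := by
    unfold renyiDiv
    rw [inv_mul_le_iff₀ hα1]
    have := Real.log_le_log hS_pos hS_le2
    rwa [Real.log_exp, mul_comm ε (α - 1)] at this
  -- Bound 1 : renyiDiv ≤ α * ε² / 2
  have hbound1 : renyiDiv α P Q ≤ α * ε ^ 2 / 2 := by
    have hS_le1 : S ≤ Real.exp (α * (α - 1) * ε ^ 2 / 2) := by
      rcases eq_or_lt_of_le hε with heq | hεpos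
      · -- ε = 0 : use bound 2
        have : S ≤ Real.exp (ε * (α - 1)) := hS_le2
        rw [← heq] at *
        simpa using this
      · -- ε > 0 : convexity chord + master inequality
        set a := Real.exp (-ε) with ha_def
        set b := Real.exp ε with hb_def
        have hab : a < b := Real.exp_lt_exp.2 (by linarith)
        have ha0 : 0 < a := Real.exp_pos _
        have hba : 0 < b - a := by linarith
        have hchord : ∀ y, (P y / Q y) ^ α
            ≤ ((b - P y / Q y) / (b - a)) * a ^ α + ((P y / Q y - a) / (b - a)) * b ^ α :=
          fun y => chord_bound ha0 hab (hr_lb y) (hr_ub y) (le_of_lt hα)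
        have hsum_le : S ≤ ((b - 1) * a ^ α + (1 - a) * b ^ α) / (b - a) := by
          have step : S ≤ ∑ y, Q y * (((b - P y / Q y) / (b - a)) * a ^ α
              + ((P y / Q y - a) / (b - a)) * b ^ α) := by
            apply Finset.sum_le_sum
            intro y _
            exact mul_le_mul_of_nonneg_left (hchord y) (le_of_lt (hQpos y))
          have hterm_eq : ∀ y ∈ Finset.univ, Q y * (((b - P y / Q y) / (b - a)) * a ^ α
              + ((P y / Q y - a) / (b - a)) * b ^ α)
              = (a ^ α * (b * Q y - P y) + b ^ α * (P y - a * Q y)) / (b - a) := by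
            intro y _
            have hQne : Q y ≠ 0 := ne_of_gt (hQpos y)
            have hbane : b - a ≠ 0 := ne_of_gt hba
            field_simp
          rw [Finset.sum_congr rfl hterm_eq] at step
          rw [← Finset.sum_div] at step
          have hsum_eq : ∑ y, (a ^ α * (b * Q y - P y) + b ^ α * (P y - a * Q y))
              = (b - 1) * a ^ α + (1 - a) * b ^ α := by
            rw [Finset.sum_add_distrib, ← Finset.mul_sum, ← Finset.mul_sum]
            rw [Finset.sum_sub_distrib, Finset.sum_sub_distrib, ← Finset.mul_sum]
            rw [← Finset.mul_sum]
            rw [hpmf D, hpmf D']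
            ring
          rwa [hsum_eq] at step
        have hmaster := master_ineq ε α hεpos hα
        have haα : a ^ α = Real.exp (-(ε * α)) := by
          rw [ha_def, ← Real.exp_mul]; ring_nf
        have hbα : b ^ α = Real.exp (ε * α) := by
          rw [hb_def, ← Real.exp_mul]
        rw [haα, hbα] at hsum_le
        calc S ≤ ((b - 1) * Real.exp (-(ε * α)) + (1 - a) * Real.exp (ε * α)) / (b - a) :=
              hsum_le
          _ ≤ Real.exp (α * (α - 1) * ε ^ 2 / 2) := by
              rw [div_le_iff₀ hba]
              calc (b - 1) * Real.exp (-(ε * α)) + (1 - a) * Real.exp (ε * α)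
                  ≤ (b - a) * Real.exp (α * (α - 1) * ε ^ 2 / 2) := hmaster
                _ = Real.exp (α * (α - 1) * ε ^ 2 / 2) * (b - a) := by ring
    unfold renyiDiv
    rw [inv_mul_le_iff₀ hα1]
    have := Real.log_le_log hS_pos hS_le1
    rw [Real.log_exp] at this
    calc Real.log S ≤ α * (α - 1) * ε ^ 2 / 2 := this
      _ = (α - 1) * (α * ε ^ 2 / 2) := by ring
  exact le_min hbound1 hbound2
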